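/- arXiv:2212.12567 — 4 statements merged into one kernel-verified Lean document; each statement's English description precedes it below -/
import Mathlib

section
/- For every non-negative sequence (u_t)_{t=1}^T satisfying u_t ≤ 1 + U_{t-1} for all t∈[T], where U_t = ∑_{k=1}^t u_k (with U_0 = 0), one has ∑_{t=1}^T u_t/(1 + U_{t-1}) ≤ log_2(1 + U_T). -/
open Finset

lemma aux_rpow (r : ℝ) (h0 : 0 ≤ r) (h1 : r ≤ 1) : (2:ℝ) ^ r ≤ 1 + r := by
  have hc := convexOn_exp.2 (Set.mem_univ (0:ℝ)) (Set.mem_univ (Real.log 2))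
    (by linarith : (0:ℝ) ≤ 1 - r) h0 (by ring)
  simp only [smul_eq_mul, mul_zero, zero_add, Real.exp_zero, Real.exp_log (by norm_num : (0:ℝ) < 2)] at hc
  have : (2:ℝ) ^ r = Real.exp (r * Real.log 2) := by
    rw [Real.rpow_def_of_pos (by norm_num)]; ring_nf
  rw [this]; linarith

lemma aux_logb (r : ℝ) (h0 : 0 ≤ r) (h1 : r ≤ 1) : r ≤ Real.logb 2 (1 + r) := by
  have h2 : (2:ℝ) ^ r ≤ 1 + r := aux_rpow r h0 h1
  have hp : (0:ℝ) < (2:ℝ) ^ r := Real.rpow_pos_of_pos (by norm_num) r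
  have hl : Real.log ((2:ℝ) ^ r) ≤ Real.log (1 + r) := Real.log_le_log hp h2
  rw [Real.log_rpow (by norm_num)] at hl
  rw [Real.logb, le_div_iff₀ (Real.log_pos (by norm_num))]
  linarith

/-- If a non-negative sequence satisfies `u t ≤ 1 + U (t-1)` where `U t` is the
partial sum of the first `t` terms, then `∑ u t / (1 + U (t-1)) ≤ log₂ (1 + U T)`.
Here `t` ranges over `0, …, T-1`, so `U t = ∑_{k<t} u k` plays the role of `U_{t-1}`. -/
theorem stmt_0 (T : ℕ) (u : ℕ → ℝ)
    (hnonneg : ∀ t < T, 0 ≤ u t)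
    (hbound : ∀ t < T, u t ≤ 1 + ∑ k ∈ range t, u k) :
    ∑ t ∈ range T, u t / (1 + ∑ k ∈ range t, u k) ≤
      Real.logb 2 (1 + ∑ k ∈ range T, u k) := by
  induction T with
  | zero => simp
  | succ T ih =>
    have hnn : ∀ t < T, 0 ≤ u t := fun t ht => hnonneg t (ht.trans (Nat.lt_succ_self T))
    have hbd : ∀ t < T, u t ≤ 1 + ∑ k ∈ range t, u k :=
      fun t ht => hbound t (ht.trans (Nat.lt_succ_self T))
    have hU : (0:ℝ) ≤ ∑ k ∈ range T, u k := Finset.sum_nonneg fun k hk => hnn k (mem_range.mp hk)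
    have hUpos : (0:ℝ) < 1 + ∑ k ∈ range T, u k := by linarith
    have huT : 0 ≤ u T := hnonneg T (Nat.lt_succ_self T)
    have hbT : u T ≤ 1 + ∑ k ∈ range T, u k := hbound T (Nat.lt_succ_self T)
    set U := ∑ k ∈ range T, u k with hUdef
    have hr0 : 0 ≤ u T / (1 + U) := div_nonneg huT hUpos.le
    have hr1 : u T / (1 + U) ≤ 1 := (div_le_one hUpos).mpr hbT
    have key : u T / (1 + U) ≤ Real.logb 2 (1 + u T / (1 + U)) := aux_logb _ hr0 hr1
    have heq : (1 + (U + u T)) = (1 + U) * (1 + u T / (1 + U)) := by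
      field_simp
      ring
    rw [Finset.sum_range_succ, Finset.sum_range_succ, ← hUdef, heq,
      Real.logb_mul hUpos.ne' (by positivity)]
    have := ih hnn hbd
    linarith
end

section
/- Consider a rooted forest whose nodes are information sets partitioned by depth into levels X_1,…,X_H, where each node x has a finite nonempty action set of size A(x), and each pair (node x at depth h, action a) leads to a set of children X_{h+1}(x,a) at depth h+1 (empty when h = H). Define A*(x) = ∑_{x' ≥ x} A(x') (sum over the subtree rooted at x), and A_X = ∑_x A(x). Let p* be the balanced transition kernel: p*_0(x_1) = A*(x_1)/A_X for roots x_1, and p*_h(x_{h+1}|x_h,a_h) = A*(x_{h+1}) / ∑_{x' ∈ X_{h+1}(x_h,a_h)} A*(x'), with p*_{1:h}(x_h) the product along the unique path to x_h. Then for any transition kernel p^ν on the forest (i.e., p^ν_0 a probability distribution on roots and p^ν_h(·|x_h,a_h) a probability distribution on X_{h+1}(x_h,a_h), with p^ν_{1:h} the induced path products), one has ∑_{h=1}^H ∑_{x_h ∈ X_h} A(x_h) · p^ν_{1:h}(x_h)/p*_{1:h}(x_h) = A_X. -/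
open Finset
open scoped Classical

/-- `u` is a child of `v` (via some action `a`). -/
def upRel {X : Type*} (par : X → Option (X × ℕ)) (u v : X) : Prop :=
  ∃ a, par u = some (v, a)

/-- `y` is a descendant of `x` (including `x` itself): `y` reaches `x` by
repeatedly moving to its parent. -/
def isDesc {X : Type*} (par : X → Option (X × ℕ)) (x y : X) : Prop :=
  Relation.ReflTransGen (upRel par) y x

/-- `A*(x)`: the total number of actions in the subtree rooted at `x`. -/
noncomputable def Astar {X : Type*} [Fintype X] (par : X → Option (X × ℕ))
    (A : X → ℕ) (x : X) : ℕ :=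
  ∑ y ∈ Finset.univ.filter (fun y => isDesc par x y), A y

/-- `A_X`: the total number of actions in the forest. -/
def AtotX {X : Type*} [Fintype X] (A : X → ℕ) : ℕ := ∑ x, A x

/-- The children of the pair (node `y`, action `a`). -/
noncomputable def childrenOf {X : Type*} [Fintype X] (par : X → Option (X × ℕ))
    (y : X) (a : ℕ) : Finset X :=
  Finset.univ.filter (fun z => par z = some (y, a))

noncomputable def childSet {X : Type*} [Fintype X] (par : X → Option (X × ℕ))
    (y : X) : Finset X :=
  Finset.univ.filter (fun z => ∃ a, par z = some (y, a))

section Aux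
set_option linter.unusedSectionVars false
variable {X : Type*} [Fintype X] {par : X → Option (X × ℕ)} {dep : X → ℕ}

lemma desc_dep (hpar : ∀ x y a, par x = some (y, a) → dep x = dep y + 1)
    {u v : X} (h : Relation.ReflTransGen (upRel par) u v) :
    dep v ≤ dep u ∧ (dep v = dep u → u = v) := by
  induction h using Relation.ReflTransGen.head_induction_on with
  | refl => exact ⟨le_rfl, fun _ => rfl⟩
  | head h' h ih =>
    obtain ⟨a, ha⟩ := h'
    have hd := hpar _ _ _ ha
    exact ⟨by omega, fun h => by omega⟩

lemma anc_unique (hpar : ∀ x y a, par x = some (y, a) → dep x = dep y + 1)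
    {z c : X} (h1 : Relation.ReflTransGen (upRel par) z c) :
    ∀ c', Relation.ReflTransGen (upRel par) z c' → dep c = dep c' → c = c' := by
  induction h1 using Relation.ReflTransGen.head_induction_on with
  | refl =>
    intro c' h2 hd
    exact (desc_dep hpar h2).2 hd.symm
  | @head u w h' h ih =>
    intro c' h2 hd
    obtain ⟨a, ha⟩ := h'
    have hu : dep u = dep w + 1 := hpar _ _ _ ha
    rcases h2.cases_head with rfl | ⟨w', hw', h2'⟩
    · have hle := (desc_dep hpar h).1
      omega
    · obtain ⟨a', ha'⟩ := hw'
      have : w' = w := by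
        rw [ha] at ha'
        exact (Prod.mk.injEq .. ▸ (Option.some_injective _ ha')).1.symm
      exact ih c' (this ▸ h2') hd

lemma descFilter_eq (y : X) :
    Finset.univ.filter (fun w => isDesc par y w)
      = insert y ((childSet par y).biUnion
          (fun z => Finset.univ.filter (fun w => isDesc par z w))) := by
  ext w
  simp only [Finset.mem_filter, Finset.mem_insert,
    Finset.mem_biUnion, Finset.mem_univ, true_and]
  simp only [childSet, isDesc, Finset.mem_filter, Finset.mem_univ, true_and]
  constructor
  · intro h
    rcases h.cases_tail with rfl | ⟨c, hc1, hc2⟩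
    · exact Or.inl rfl
    · exact Or.inr ⟨c, hc2, hc1⟩
  · rintro (rfl | ⟨z, hz, h⟩)
    · exact Relation.ReflTransGen.refl
    · exact h.tail hz

lemma childSet_disj (hpar : ∀ x y a, par x = some (y, a) → dep x = dep y + 1)
    (y : X) :
    (↑(childSet par y) : Set X).PairwiseDisjoint
      (fun z => Finset.univ.filter (fun w => isDesc par z w)) := by
  intro z hz z' hz' hne
  simp only [Finset.coe_filter, Set.mem_setOf_eq, childSet, Finset.mem_coe,
    Finset.mem_filter, Finset.mem_univ, true_and] at hz hz'
  obtain ⟨a, ha⟩ := hz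
  obtain ⟨a', ha'⟩ := hz'
  refine Finset.disjoint_left.2 fun w hw hw' => hne ?_
  simp only [Finset.mem_filter] at hw hw'
  simp only [isDesc] at hw hw'
  exact anc_unique hpar hw.2 z' hw'.2
    (by rw [hpar _ _ _ ha, hpar _ _ _ ha'])

lemma Astar_decomp (hpar : ∀ x y a, par x = some (y, a) → dep x = dep y + 1)
    (A : X → ℕ) (y : X) :
    Astar par A y = A y + ∑ z ∈ childSet par y, Astar par A z := by
  have hy : y ∉ (childSet par y).biUnion
      (fun z => Finset.univ.filter (fun w => isDesc par z w)) := by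
    simp only [Finset.mem_biUnion, childSet, Finset.mem_filter, Finset.mem_univ,
      true_and, not_exists, not_and]
    rintro z ⟨a, ha⟩ hdesc
    have h1 := (desc_dep hpar hdesc).1
    have h2 := hpar _ _ _ ha
    omega
  rw [Astar, descFilter_eq y, Finset.sum_insert hy,
    Finset.sum_biUnion (childSet_disj hpar y)]
  rfl

lemma sum_childSet {M : Type*} [AddCommMonoid M] {A : X → ℕ}
    (hpar : ∀ x y a, par x = some (y, a) → a < A y) (y : X) (f : X → M) :
    ∑ z ∈ childSet par y, f z
      = ∑ a ∈ Finset.range (A y), ∑ z ∈ childrenOf par y a, f z := by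
  rw [← Finset.sum_biUnion]
  · apply Finset.sum_congr _ fun _ _ => rfl
    ext z
    simp only [childSet, childrenOf, Finset.mem_biUnion, Finset.mem_range,
      Finset.mem_filter, Finset.mem_univ, true_and]
    constructor
    · rintro ⟨a, ha⟩
      exact ⟨a, hpar _ _ _ ha, ha⟩
    · rintro ⟨a, _, ha⟩
      exact ⟨a, ha⟩
  · intro a _ a' _ hne
    refine Finset.disjoint_left.2 fun z hz hz' => hne ?_
    simp only [childrenOf, Finset.mem_filter] at hz hz'
    have := hz.2.symm.trans hz'.2
    simpa using (Option.some_injective _ this)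

lemma div_helper1 (c p S : ℝ) (hc : c ≠ 0) : c * p / (c / S) = S * p := by
  rw [div_div_eq_mul_div, mul_assoc, mul_div_cancel_left₀ _ hc]
  exact mul_comm p S

lemma div_helper2 (c p q S : ℝ) (hc : c ≠ 0) :
    c * p / (q * (c / S)) = S * p / q := by
  rw [mul_comm q (c / S), ← div_div, div_helper1 c p S hc]

end Aux

/-- Balanced-transition identity: on a rooted forest of depth `H` with perfect
recall (levels `X_h`, action sets of size `A x`, parent map `par`), with `p*`
the balanced transition path product and `pν` the path product of any
transition kernel, `∑_{h=1}^H ∑_{x ∈ X_h} A(x)·pν(x)/p*(x) = A_X`; the double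
sum over depths collapses to the sum over all nodes. -/
theorem stmt_6 {X : Type*} [Fintype X]
    (H : ℕ) (hH : 1 ≤ H) (dep : X → ℕ) (A : X → ℕ) (par : X → Option (X × ℕ))
    (hdep : ∀ x, 1 ≤ dep x ∧ dep x ≤ H)
    (hApos : ∀ x, 1 ≤ A x)
    (hroot : ∀ x, par x = none ↔ dep x = 1)
    (hpar : ∀ x y a, par x = some (y, a) → dep x = dep y + 1 ∧ a < A y)
    (hchild : ∀ x a, dep x < H → a < A x → ∃ y, par y = some (x, a))
    (pstar : X → ℝ)
    (hpstar_root : ∀ x, par x = none → pstar x = (Astar par A x : ℝ) / (AtotX A : ℝ))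
    (hpstar_step : ∀ x y a, par x = some (y, a) →
      pstar x = pstar y *
        ((Astar par A x : ℝ) / ∑ z ∈ childrenOf par y a, (Astar par A z : ℝ)))
    (pnu : X → ℝ) (hpnu_nonneg : ∀ x, 0 ≤ pnu x)
    (hpnu_root : ∑ x ∈ Finset.univ.filter (fun x => par x = none), pnu x = 1)
    (hpnu_step : ∀ x a, dep x < H → a < A x →
      ∑ z ∈ childrenOf par x a, pnu z = pnu x) :
    ∑ x, (A x : ℝ) * pnu x / pstar x = (AtotX A : ℝ) := by
  classical
  have hpard : ∀ x y a, par x = some (y, a) → dep x = dep y + 1 :=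
    fun x y a h => (hpar x y a h).1
  have hparA : ∀ x y a, par x = some (y, a) → a < A y :=
    fun x y a h => (hpar x y a h).2
  set g : X → ℝ := fun x => (Astar par A x : ℝ) * pnu x / pstar x with hg
  have hAstar_pos : ∀ x, 0 < Astar par A x := by
    intro x
    have hx : x ∈ Finset.univ.filter (fun y => isDesc par x y) :=
      Finset.mem_filter.2 ⟨Finset.mem_univ x, Relation.ReflTransGen.refl⟩
    exact lt_of_lt_of_le (hApos x)
      (Finset.single_le_sum (fun i _ => Nat.zero_le _) hx)
  -- key per-node identity
  have key : ∀ y, ∑ z ∈ childSet par y, g z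
      = ((Astar par A y : ℝ) - A y) * pnu y / pstar y := by
    intro y
    rw [sum_childSet hparA y g]
    have inner : ∀ a ∈ Finset.range (A y),
        ∑ z ∈ childrenOf par y a, g z
          = (∑ z ∈ childrenOf par y a, (Astar par A z : ℝ)) * pnu y / pstar y := by
      intro a ha
      rw [Finset.mem_range] at ha
      by_cases hyH : dep y < H
      · have hterm : ∀ z ∈ childrenOf par y a,
            g z = (∑ w ∈ childrenOf par y a, (Astar par A w : ℝ)) * pnu z / pstar y := by
          intro z hz
          have hzmem := hz
          rw [childrenOf, Finset.mem_filter] at hz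
          have hps := hpstar_step z y a hz.2
          have hA0 : (Astar par A z : ℝ) ≠ 0 := by
            exact_mod_cast (hAstar_pos z).ne'
          rw [hg]
          simp only
          rw [hps, div_helper2 _ _ _ _ hA0]
        rw [Finset.sum_congr rfl hterm, ← Finset.sum_div, ← Finset.mul_sum,
          hpnu_step y a hyH ha]
      · have hempty : childrenOf par y a = ∅ := by
          rw [Finset.eq_empty_iff_forall_notMem]
          intro z hz
          rw [childrenOf, Finset.mem_filter] at hz
          have h1 := (hpar z y a hz.2).1
          have h2 := (hdep z).2
          have h3 := (hdep y).2
          omega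
        simp [hempty]
    rw [Finset.sum_congr rfl inner, ← Finset.sum_div, ← Finset.sum_mul]
    have hdec : (Astar par A y : ℝ) - A y
        = ∑ a ∈ Finset.range (A y), ∑ z ∈ childrenOf par y a, (Astar par A z : ℝ) := by
      have h1 := Astar_decomp hpard A y
      have h2 := sum_childSet hparA y (fun z => (Astar par A z : ℝ))
      rw [← h2]
      have : (Astar par A y : ℝ) = A y + ∑ z ∈ childSet par y, (Astar par A z : ℝ) := by
        rw [h1]; push_cast; ring
      rw [this]; ring
    rw [hdec]
  -- telescoping
  have keyf : ∀ y, (A y : ℝ) * pnu y / pstar y = g y - ∑ z ∈ childSet par y, g z := by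
    intro y
    rw [key y, hg]
    simp only
    ring
  have hsum : ∑ x, (A x : ℝ) * pnu x / pstar x
      = ∑ x, g x - ∑ y, ∑ z ∈ childSet par y, g z := by
    rw [← Finset.sum_sub_distrib]
    exact Finset.sum_congr rfl fun y _ => keyf y
  have hpd : (↑(Finset.univ : Finset X) : Set X).PairwiseDisjoint (childSet par) := by
    intro y _ y' _ hne
    refine Finset.disjoint_left.2 fun z hz hz' => hne ?_
    simp only [childSet, Finset.mem_filter, Finset.mem_univ, true_and] at hz hz'
    obtain ⟨a, ha⟩ := hz
    obtain ⟨a', ha'⟩ := hz'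
    rw [ha] at ha'
    exact congrArg Prod.fst (Option.some_injective _ ha')
  have hb : Finset.univ.biUnion (childSet par)
      = Finset.univ.filter (fun z => ¬ par z = none) := by
    ext z
    simp only [childSet, Finset.mem_biUnion, Finset.mem_filter, Finset.mem_univ, true_and]
    constructor
    · rintro ⟨y, a, h⟩
      rw [h]; simp
    · intro h
      cases hp : par z with
      | none => exact absurd hp h
      | some p => obtain ⟨w, b⟩ := p; exact ⟨w, b, rfl⟩
  have hdouble : ∑ y, ∑ z ∈ childSet par y, g z
      = ∑ z ∈ Finset.univ.filter (fun z => ¬ par z = none), g z := by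
    rw [← hb, Finset.sum_biUnion hpd]
  have hsplit : ∑ x, g x
      = ∑ z ∈ Finset.univ.filter (fun z => par z = none), g z
        + ∑ z ∈ Finset.univ.filter (fun z => ¬ par z = none), g z :=
    (Finset.sum_filter_add_sum_filter_not _ _ _).symm
  -- roots
  have hroots_ne : (Finset.univ.filter (fun x => par x = none)).Nonempty := by
    by_contra h
    rw [Finset.not_nonempty_iff_eq_empty] at h
    rw [h, Finset.sum_empty] at hpnu_root
    norm_num at hpnu_root
  obtain ⟨y0, hy0⟩ := hroots_ne
  have hAX : (0 : ℝ) < (AtotX A : ℝ) := by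
    have : 0 < AtotX A :=
      lt_of_lt_of_le (hApos y0)
        (Finset.single_le_sum (fun i _ => Nat.zero_le _) (Finset.mem_univ y0))
    exact_mod_cast this
  have hrootg : ∀ y ∈ Finset.univ.filter (fun x => par x = none),
      g y = (AtotX A : ℝ) * pnu y := by
    intro y hy
    rw [Finset.mem_filter] at hy
    have hps := hpstar_root y hy.2
    have hA0 : (Astar par A y : ℝ) ≠ 0 := by exact_mod_cast (hAstar_pos y).ne'
    rw [hg]
    simp only
    rw [hps, div_helper1 _ _ _ hA0]
  calc ∑ x, (A x : ℝ) * pnu x / pstar x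
      = ∑ x, g x - ∑ y, ∑ z ∈ childSet par y, g z := hsum
    _ = ∑ z ∈ Finset.univ.filter (fun z => par z = none), g z := by
        rw [hdouble, hsplit]; ring
    _ = ∑ z ∈ Finset.univ.filter (fun z => par z = none), (AtotX A : ℝ) * pnu z :=
        Finset.sum_congr rfl hrootg
    _ = (AtotX A : ℝ) := by rw [← Finset.mul_sum, hpnu_root, mul_one]
end

section
/- In the setting of the balanced transition kernel on a rooted forest where every node has exactly A actions: for each depth h ∈ [H] and each node x_h at depth h, A*(x_h) ≥ A(x_h)·A^{H-h}; consequently, for any transition kernel p^ν, ∑_{x_h ∈ X_h} A(x_h)·p^ν_{1:h}(x_h)/p*_{1:h}(x_h) ≤ A^{h-H}·A_X. -/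
open Finset
open scoped Classical

section Aux
variable {X : Type*} {par : X → Option (X × ℕ)} {dep : X → ℕ}

lemma aux_dep_le (hd : ∀ u v, upRel par u v → dep u = dep v + 1)
    {x y : X} (h : isDesc par x y) : dep x ≤ dep y := by
  induction h with
  | refl => exact le_refl _
  | tail h1 h2 ih => have := hd _ _ h2; omega

lemma aux_eq_of_dep (hd : ∀ u v, upRel par u v → dep u = dep v + 1)
    {x y : X} (h : isDesc par x y) (he : dep x = dep y) : x = y := by
  induction h with
  | refl => rfl
  | tail h1 h2 ih =>
    have := hd _ _ h2
    have := aux_dep_le hd h1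
    omega

lemma aux_uniq (hd : ∀ u v, upRel par u v → dep u = dep v + 1)
    {y z1 : X} (h1 : Relation.ReflTransGen (upRel par) y z1) :
    ∀ z2, Relation.ReflTransGen (upRel par) y z2 → dep z1 = dep z2 → z1 = z2 := by
  induction h1 using Relation.ReflTransGen.head_induction_on with
  | refl =>
    intro z2 h2 he
    exact (aux_eq_of_dep hd h2 he.symm).symm
  | head hstep htail ih =>
    rename_i y c
    intro z2 h2 he
    rcases h2.cases_head with rfl | ⟨c', hc', h2'⟩
    · have h3 := aux_dep_le hd htail
      have := hd _ _ hstep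
      omega
    · obtain ⟨a, ha⟩ := hstep
      obtain ⟨a', ha'⟩ := hc'
      rw [ha] at ha'
      have : c' = c := by injection ha'.symm with h; exact (Prod.mk.injEq _ _ _ _ ▸ h).1
      subst this
      exact ih z2 h2' he

end Aux

/-- On a rooted forest of depth `H` where every node has exactly `A₀` actions:
`A*(x_h) ≥ A(x_h)·A₀^{H-h}` for every node `x_h` at depth `h`, and consequently,
for any transition kernel `pν`,
`∑_{x_h ∈ X_h} A(x_h)·pν(x_h)/p*(x_h) ≤ A₀^{h-H}·A_X` for every depth `h ∈ [H]`. -/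
theorem stmt_7 {X : Type*} [Fintype X]
    (H : ℕ) (hH : 1 ≤ H) (dep : X → ℕ) (A : X → ℕ) (par : X → Option (X × ℕ))
    (A₀ : ℕ) (hA₀ : 1 ≤ A₀) (hAfix : ∀ x, A x = A₀)
    (hdep : ∀ x, 1 ≤ dep x ∧ dep x ≤ H)
    (hroot : ∀ x, par x = none ↔ dep x = 1)
    (hpar : ∀ x y a, par x = some (y, a) → dep x = dep y + 1 ∧ a < A y)
    (hchild : ∀ x a, dep x < H → a < A x → ∃ y, par y = some (x, a))
    (pstar : X → ℝ)
    (hpstar_root : ∀ x, par x = none → pstar x = (Astar par A x : ℝ) / (AtotX A : ℝ))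
    (hpstar_step : ∀ x y a, par x = some (y, a) →
      pstar x = pstar y *
        ((Astar par A x : ℝ) / ∑ z ∈ childrenOf par y a, (Astar par A z : ℝ)))
    (pnu : X → ℝ) (hpnu_nonneg : ∀ x, 0 ≤ pnu x)
    (hpnu_root : ∑ x ∈ Finset.univ.filter (fun x => par x = none), pnu x = 1)
    (hpnu_step : ∀ x a, dep x < H → a < A x →
      ∑ z ∈ childrenOf par x a, pnu z = pnu x) :
    (∀ x, (A x : ℝ) * (A₀ : ℝ) ^ (H - dep x) ≤ (Astar par A x : ℝ)) ∧
      ∀ h, 1 ≤ h → h ≤ H →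
        ∑ x ∈ Finset.univ.filter (fun x => dep x = h), (A x : ℝ) * pnu x / pstar x ≤
          (AtotX A : ℝ) / (A₀ : ℝ) ^ (H - h) := by
  have hd : ∀ u v, upRel par u v → dep u = dep v + 1 := by
    rintro u v ⟨a, ha⟩; exact (hpar u v a ha).1
  -- descendant sets and children sets
  set Ds : X → Finset X := fun x => Finset.univ.filter (fun y => isDesc par x y) with hDs
  set Ch : X → Finset X := fun x => Finset.univ.filter (fun z => ∃ a, par z = some (x, a)) with hCh
  have hAstar_def : ∀ x, Astar par A x = ∑ y ∈ Ds x, A y := fun x => rfl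
  -- membership facts
  have hmemDs : ∀ x y, y ∈ Ds x ↔ isDesc par x y := by
    intro x y; simp [hDs]
  have hmemCh : ∀ x z, z ∈ Ch x ↔ ∃ a, par z = some (x, a) := by
    intro x z; simp [hCh]
  have hdepCh : ∀ x z, z ∈ Ch x → dep z = dep x + 1 := by
    intro x z hz
    obtain ⟨a, ha⟩ := (hmemCh x z).mp hz
    exact (hpar z x a ha).1
  -- decomposition of subtree
  have hDs_eq : ∀ x, Ds x = insert x ((Ch x).biUnion Ds) := by
    intro x
    ext y
    simp only [hmemDs, Finset.mem_insert, Finset.mem_biUnion]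
    constructor
    · intro h
      rcases Relation.ReflTransGen.cases_tail h with h' | ⟨c, hc1, hc2⟩
      · exact Or.inl h'.symm
      · exact Or.inr ⟨c, (hmemCh x c).mpr hc2, hc1⟩
    · rintro (rfl | ⟨z, hz, hy⟩)
      · exact Relation.ReflTransGen.refl
      · obtain ⟨a, ha⟩ := (hmemCh x z).mp hz
        exact Relation.ReflTransGen.tail hy ⟨a, ha⟩
  have hx_not : ∀ x, x ∉ (Ch x).biUnion Ds := by
    intro x hx
    rw [Finset.mem_biUnion] at hx
    obtain ⟨z, hz, hxz⟩ := hx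
    have h1 := aux_dep_le hd ((hmemDs z x).mp hxz)
    have := hdepCh x z hz
    omega
  have hdisjDs : ∀ x : X, Set.PairwiseDisjoint (↑(Ch x)) Ds := by
    intro x z1 hz1 z2 hz2 hne
    simp only [Finset.mem_coe] at hz1 hz2
    simp only [Function.onFun]
    refine Finset.disjoint_left.mpr ?_
    intro y hy1 hy2
    exact hne (aux_uniq hd ((hmemDs z1 y).mp hy1) z2 ((hmemDs z2 y).mp hy2)
      (by rw [hdepCh x z1 hz1, hdepCh x z2 hz2]))
  have hAstar_decomp : ∀ x, Astar par A x = A x + ∑ z ∈ Ch x, Astar par A z := by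
    intro x
    rw [hAstar_def, hDs_eq, Finset.sum_insert (hx_not x), Finset.sum_biUnion (hdisjDs x)]
    rfl
  have hChdisj : ∀ x : X, Set.PairwiseDisjoint (↑(Finset.range (A x))) (childrenOf par x) := by
    intro x a ha b hb hne
    simp only [Function.onFun]
    refine Finset.disjoint_left.mpr fun z hz1 hz2 => ?_
    simp only [childrenOf, Finset.mem_filter] at hz1 hz2
    have h := hz1.2.symm.trans hz2.2
    exact hne (congrArg Prod.snd (Option.some.inj h))
  have hCh_biUnion : ∀ x, Ch x = (Finset.range (A x)).biUnion (childrenOf par x) := by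
    intro x
    ext z
    simp only [hmemCh, Finset.mem_biUnion, Finset.mem_range, childrenOf, Finset.mem_filter,
      Finset.mem_univ, true_and]
    constructor
    · rintro ⟨a, ha⟩
      exact ⟨a, (hpar z x a ha).2, ha⟩
    · rintro ⟨a, _, ha⟩
      exact ⟨a, ha⟩
  have hCh_sum : ∀ (x : X) (f : X → ℝ),
      ∑ z ∈ Ch x, f z = ∑ a ∈ Finset.range (A x), ∑ z ∈ childrenOf par x a, f z := by
    intro x f
    rw [hCh_biUnion x, Finset.sum_biUnion (hChdisj x)]
  have hCh_sumN : ∀ x : X,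
      ∑ z ∈ Ch x, Astar par A z
        = ∑ a ∈ Finset.range (A x), ∑ z ∈ childrenOf par x a, Astar par A z := by
    intro x
    rw [hCh_biUnion x, Finset.sum_biUnion (hChdisj x)]
  -- positivity facts
  have hA_le_Astar : ∀ x, A x ≤ Astar par A x := by
    intro x
    rw [hAstar_def]
    exact Finset.single_le_sum (fun i _ => Nat.zero_le _)
      ((hmemDs x x).mpr Relation.ReflTransGen.refl)
  have hApos : ∀ x : X, 0 < A x := by
    intro x; rw [hAfix x]; omega
  have hAstar_pos : ∀ x, 0 < Astar par A x :=
    fun x => lt_of_lt_of_le (hApos x) (hA_le_Astar x)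
  have hrootne : (Finset.univ.filter (fun x : X => par x = none)).Nonempty := by
    by_contra h
    rw [Finset.not_nonempty_iff_eq_empty] at h
    rw [h, Finset.sum_empty] at hpnu_root
    norm_num at hpnu_root
  have hAX_pos : 0 < AtotX A := by
    obtain ⟨x, hx⟩ := hrootne
    exact lt_of_lt_of_le (hApos x)
      (Finset.single_le_sum (fun i _ => Nat.zero_le _) (Finset.mem_univ x))
  have hpstar_pos : ∀ x, 0 < pstar x := by
    suffices h : ∀ n (x : X), dep x = n → 0 < pstar x from fun x => h (dep x) x rfl
    intro n
    induction n using Nat.strong_induction_on with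
    | _ n ih =>
      intro x hx
      cases hpx : par x with
      | none =>
        rw [hpstar_root x hpx]
        exact div_pos (by exact_mod_cast hAstar_pos x) (by exact_mod_cast hAX_pos)
      | some p =>
        obtain ⟨y, a⟩ := p
        have hdy := (hpar x y a hpx).1
        have hy : 0 < pstar y := ih (dep y) (by omega) y rfl
        rw [hpstar_step x y a hpx]
        have hCpos : (0:ℝ) < ∑ z ∈ childrenOf par y a, (Astar par A z : ℝ) := by
          refine Finset.sum_pos' (fun i _ => by positivity)
            ⟨x, by simp [childrenOf, hpx], by exact_mod_cast hAstar_pos x⟩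
        exact mul_pos hy (div_pos (by exact_mod_cast hAstar_pos x) hCpos)
  -- Part 1
  have part1N : ∀ x, A x * A₀ ^ (H - dep x) ≤ Astar par A x := by
    suffices h : ∀ n (x : X), H - dep x = n → A x * A₀ ^ n ≤ Astar par A x from
      fun x => h (H - dep x) x rfl
    intro n
    induction n with
    | zero => intro x h0; simpa using hA_le_Astar x
    | succ n ih =>
      intro x hn
      have hdx : dep x < H := by have := (hdep x).2; omega
      have key : ∀ a ∈ Finset.range (A x),
          A₀ ^ (n+1) ≤ ∑ z ∈ childrenOf par x a, Astar par A z := by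
        intro a ha
        obtain ⟨y, hy⟩ := hchild x a hdx (Finset.mem_range.mp ha)
        have hdy := (hpar y x a hy).1
        have h1 : A y * A₀ ^ n ≤ Astar par A y := ih y (by omega)
        have h2 : Astar par A y ≤ ∑ z ∈ childrenOf par x a, Astar par A z :=
          Finset.single_le_sum (fun i _ => Nat.zero_le _) (by simp [childrenOf, hy])
        calc A₀ ^ (n+1) = A y * A₀ ^ n := by rw [hAfix y]; ring
          _ ≤ _ := le_trans h1 h2
      calc A x * A₀ ^ (n+1)
          = ∑ _a ∈ Finset.range (A x), A₀ ^ (n+1) := by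
            rw [Finset.sum_const, Finset.card_range]; ring
        _ ≤ ∑ a ∈ Finset.range (A x), ∑ z ∈ childrenOf par x a, Astar par A z :=
            Finset.sum_le_sum key
        _ ≤ Astar par A x := by
            rw [hAstar_decomp x, hCh_sumN x]; exact Nat.le_add_left _ _
  have part1 : ∀ x, (A x : ℝ) * (A₀ : ℝ) ^ (H - dep x) ≤ (Astar par A x : ℝ) := by
    intro x; exact_mod_cast part1N x
  refine ⟨part1, ?_⟩
  -- Part 2
  have hlayer : ∀ h : ℕ, 1 ≤ h →
      (Finset.univ.filter (fun z : X => dep z = h+1))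
        = (Finset.univ.filter (fun x : X => dep x = h)).biUnion Ch := by
    intro h hh
    ext z
    simp only [Finset.mem_filter, Finset.mem_biUnion, Finset.mem_univ, true_and]
    constructor
    · intro hz
      cases hpz : par z with
      | none => rw [hroot z] at hpz; omega
      | some p =>
        obtain ⟨x, a⟩ := p
        have := (hpar z x a hpz).1
        exact ⟨x, by omega, (hmemCh x z).mpr ⟨a, hpz⟩⟩
    · rintro ⟨x, hx, hzx⟩
      have := hdepCh x z hzx
      omega
  have hChdisj2 : ∀ s : Finset X, Set.PairwiseDisjoint (↑s) Ch := by
    intro s x1 h1 x2 h2 hne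
    simp only [Function.onFun]
    refine Finset.disjoint_left.mpr fun z hz1 hz2 => ?_
    obtain ⟨a, ha⟩ := (hmemCh x1 z).mp hz1
    obtain ⟨a', ha'⟩ := (hmemCh x2 z).mp hz2
    rw [ha] at ha'
    exact hne (congrArg Prod.fst (Option.some.inj ha'))
  have hstep_x : ∀ x : X, dep x < H →
      ∑ z ∈ Ch x, (Astar par A z : ℝ) * pnu z / pstar z
        = ((Astar par A x : ℝ) - A x) * pnu x / pstar x := by
    intro x hx
    rw [hCh_sum x]
    have hinner : ∀ a ∈ Finset.range (A x),
        ∑ z ∈ childrenOf par x a, (Astar par A z : ℝ) * pnu z / pstar z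
          = (∑ z ∈ childrenOf par x a, (Astar par A z : ℝ)) * pnu x / pstar x := by
      intro a ha
      set C := ∑ z ∈ childrenOf par x a, (Astar par A z : ℝ) with hC
      have hterm : ∀ z ∈ childrenOf par x a,
          (Astar par A z : ℝ) * pnu z / pstar z = C / pstar x * pnu z := by
        intro z hz
        have hpz : par z = some (x, a) := by simpa [childrenOf] using hz
        have hCpos : 0 < C := by
          rw [hC]
          refine Finset.sum_pos' (fun i _ => by positivity)
            ⟨z, hz, by exact_mod_cast hAstar_pos z⟩
        have hAz : (Astar par A z : ℝ) ≠ 0 := by exact_mod_cast (hAstar_pos z).ne'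
        have hpsx : pstar x ≠ 0 := (hpstar_pos x).ne'
        rw [hpstar_step z x a hpz, ← hC]
        field_simp
      rw [Finset.sum_congr rfl hterm, ← Finset.mul_sum,
        hpnu_step x a hx (Finset.mem_range.mp ha)]
      ring
    rw [Finset.sum_congr rfl hinner]
    have hn : Astar par A x
        = A x + ∑ a ∈ Finset.range (A x), ∑ z ∈ childrenOf par x a, Astar par A z := by
      rw [hAstar_decomp x, hCh_sumN x]
    have hcast : (Astar par A x : ℝ)
        = A x + ∑ a ∈ Finset.range (A x), ∑ z ∈ childrenOf par x a, (Astar par A z : ℝ) := by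
      exact_mod_cast congrArg (Nat.cast : ℕ → ℝ) hn
    have hsum : ∑ a ∈ Finset.range (A x), (∑ z ∈ childrenOf par x a, (Astar par A z : ℝ))
        = (Astar par A x : ℝ) - A x := by linarith
    rw [← Finset.sum_div, ← Finset.sum_mul, hsum]
  have hT1 : ∑ x ∈ Finset.univ.filter (fun x : X => dep x = 1),
      (Astar par A x : ℝ) * pnu x / pstar x = (AtotX A : ℝ) := by
    have hfil : (Finset.univ.filter (fun x : X => dep x = 1))
        = Finset.univ.filter (fun x : X => par x = none) := by
      ext x; simp [hroot x]
    rw [hfil]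
    have hterm : ∀ x ∈ Finset.univ.filter (fun x : X => par x = none),
        (Astar par A x : ℝ) * pnu x / pstar x = (AtotX A : ℝ) * pnu x := by
      intro x hx
      have hpx : par x = none := (Finset.mem_filter.mp hx).2
      rw [hpstar_root x hpx]
      have h1 : (Astar par A x : ℝ) ≠ 0 := by exact_mod_cast (hAstar_pos x).ne'
      have h2 : (AtotX A : ℝ) ≠ 0 := by exact_mod_cast hAX_pos.ne'
      field_simp
    rw [Finset.sum_congr rfl hterm, ← Finset.mul_sum, hpnu_root, mul_one]
  have hTstep : ∀ h : ℕ, 1 ≤ h → h < H →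
      ∑ x ∈ Finset.univ.filter (fun x : X => dep x = h+1),
        (Astar par A x : ℝ) * pnu x / pstar x
      = (∑ x ∈ Finset.univ.filter (fun x : X => dep x = h),
          (Astar par A x : ℝ) * pnu x / pstar x)
        - ∑ x ∈ Finset.univ.filter (fun x : X => dep x = h),
          (A x : ℝ) * pnu x / pstar x := by
    intro h h1 h2
    rw [hlayer h h1, Finset.sum_biUnion (hChdisj2 _)]
    rw [← Finset.sum_sub_distrib]
    refine Finset.sum_congr rfl fun x hx => ?_
    have hdx : dep x = h := (Finset.mem_filter.mp hx).2
    rw [hstep_x x (by omega)]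
    ring
  have hSnonneg : ∀ h : ℕ, 0 ≤ ∑ x ∈ Finset.univ.filter (fun x : X => dep x = h),
      (A x : ℝ) * pnu x / pstar x := by
    intro h
    refine Finset.sum_nonneg fun x _ => ?_
    exact div_nonneg (mul_nonneg (Nat.cast_nonneg _) (hpnu_nonneg x)) (hpstar_pos x).le
  have hTle : ∀ h : ℕ, 1 ≤ h → h ≤ H →
      ∑ x ∈ Finset.univ.filter (fun x : X => dep x = h),
        (Astar par A x : ℝ) * pnu x / pstar x ≤ (AtotX A : ℝ) := by
    intro h
    induction h with
    | zero => omega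
    | succ k ih =>
      intro h1 h2
      rcases Nat.eq_zero_or_pos k with rfl | hk
      · rw [hT1]
      · have hkH : k < H := by omega
        rw [hTstep k hk hkH]
        have := ih hk (by omega)
        have := hSnonneg k
        linarith
  intro h h1 h2
  have hPpos : (0:ℝ) < (A₀ : ℝ) ^ (H - h) := by
    have : (0:ℝ) < (A₀ : ℝ) := by exact_mod_cast hA₀
    positivity
  rw [le_div_iff₀ hPpos]
  calc (∑ x ∈ Finset.univ.filter (fun x : X => dep x = h),
        (A x : ℝ) * pnu x / pstar x) * (A₀ : ℝ) ^ (H - h)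
      = ∑ x ∈ Finset.univ.filter (fun x : X => dep x = h),
          ((A x : ℝ) * pnu x / pstar x) * (A₀ : ℝ) ^ (H - h) := Finset.sum_mul ..
    _ ≤ ∑ x ∈ Finset.univ.filter (fun x : X => dep x = h),
          (Astar par A x : ℝ) * pnu x / pstar x := by
        refine Finset.sum_le_sum fun x hx => ?_
        have hdx : dep x = h := (Finset.mem_filter.mp hx).2
        have hnn : 0 ≤ pnu x / pstar x := div_nonneg (hpnu_nonneg x) (hpstar_pos x).le
        calc ((A x : ℝ) * pnu x / pstar x) * (A₀ : ℝ) ^ (H - h)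
            = ((A x : ℝ) * (A₀ : ℝ) ^ (H - dep x)) * (pnu x / pstar x) := by rw [hdx]; ring
          _ ≤ (Astar par A x : ℝ) * (pnu x / pstar x) :=
              mul_le_mul_of_nonneg_right (part1 x) hnn
          _ = (Astar par A x : ℝ) * pnu x / pstar x := by ring
    _ ≤ (AtotX A : ℝ) := hTle h h1 h2
end

section
/- Implicit-exploration per-step inequality: Let μ ∈ (0,1], γ' > 0, γ ≥ γ', r ∈ [0,1] and let b ∈ {0,1}. Define the IX loss estimate ℓ̃ = b·(1-r)/(μ + γ) and the importance-sampled estimate ℓ̂ = b·(1-r)/μ. Then 2γ'·ℓ̃ ≤ log(1 + 2γ'·ℓ̂). -/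
open Real

lemma key_aux (z : ℝ) (hz : 0 ≤ z) : 2 * z / (2 + z) ≤ Real.log (1 + z) := by
  have h2z : (0:ℝ) < 2 + z := by linarith
  rw [div_le_iff₀ h2z]
  -- show 2*z ≤ log(1+z) * (2+z) via monotonicity of f t = (2+t) log(1+t) - 2t
  set f : ℝ → ℝ := fun t => (2 + t) * Real.log (1 + t) - 2 * t with hf
  have hderiv : ∀ t ∈ Set.Ici (0:ℝ), HasDerivAt f (Real.log (1 + t) + (2 + t) / (1 + t) - 2) t := by
    intro t ht
    have ht0 : (0:ℝ) ≤ t := ht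
    have h1t : (1:ℝ) + t ≠ 0 := by positivity
    have h1 : HasDerivAt (fun t : ℝ => 1 + t) 1 t := by
      simpa using (hasDerivAt_id t).const_add 1
    have h2 : HasDerivAt (fun t : ℝ => Real.log (1 + t)) (1 / (1 + t)) t := by
      simpa using h1.log h1t
    have h3 : HasDerivAt (fun t : ℝ => 2 + t) 1 t := by
      simpa using (hasDerivAt_id t).const_add 2
    have h4 : HasDerivAt (fun t : ℝ => (2 + t) * Real.log (1 + t))
        (1 * Real.log (1 + t) + (2 + t) * (1 / (1 + t))) t := h3.mul h2
    have h5 : HasDerivAt (fun t : ℝ => 2 * t) 2 t := by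
      simpa using (hasDerivAt_id t).const_mul 2
    have := h4.sub h5
    exact this.congr_deriv (by ring)
  have hmono : MonotoneOn f (Set.Ici (0:ℝ)) := by
    apply monotoneOn_of_deriv_nonneg (convex_Ici 0)
    · apply ContinuousOn.sub
      · apply ContinuousOn.mul (by fun_prop)
        apply ContinuousOn.log (by fun_prop)
        intro t ht
        have : (0:ℝ) ≤ t := ht
        positivity
      · fun_prop
    · intro t ht
      rw [interior_Ici] at ht
      exact ((hderiv t (le_of_lt (show (0:ℝ) < t from ht))).differentiableAt).differentiableWithinAt
    · intro t ht
      rw [interior_Ici] at ht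
      have ht0 : (0:ℝ) < t := ht
      rw [(hderiv t ht0.le).deriv]
      have h1t : (0:ℝ) < 1 + t := by linarith
      have hlog : 1 - (1 + t)⁻¹ ≤ Real.log (1 + t) :=
        Real.one_sub_inv_le_log_of_pos h1t
      have : (2 + t) / (1 + t) = 1 + (1 + t)⁻¹ := by field_simp; ring
      rw [this]
      linarith
  have h0 : f 0 = 0 := by simp [hf]
  have := hmono (Set.self_mem_Ici) (Set.mem_Ici.mpr hz) hz
  rw [h0] at this
  simp only [hf] at this
  linarith [this]

/-- Implicit-exploration per-step inequality: for `μ ∈ (0,1]`, `0 < γ' ≤ γ`,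
`r ∈ [0,1]` and an indicator `b ∈ {0,1}`, with `ℓ̃ = b(1-r)/(μ+γ)` and
`ℓ̂ = b(1-r)/μ`, one has `2γ'ℓ̃ ≤ log(1 + 2γ'ℓ̂)`. -/
theorem stmt_12 (μ γ γ' r b : ℝ) (hμ0 : 0 < μ) (hμ1 : μ ≤ 1)
    (hγ' : 0 < γ') (hγ : γ' ≤ γ) (hr0 : 0 ≤ r) (hr1 : r ≤ 1)
    (hb : b = 0 ∨ b = 1) :
    2 * γ' * (b * (1 - r) / (μ + γ)) ≤ Real.log (1 + 2 * γ' * (b * (1 - r) / μ)) := by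
  rcases hb with hb | hb
  · simp [hb]
  subst hb
  set x := 1 - r with hx
  have hx0 : 0 ≤ x := by linarith
  have hx1 : x ≤ 1 := by linarith
  have hγ0 : 0 < γ := lt_of_lt_of_le hγ' hγ
  have hμγ : 0 < μ + γ := by linarith
  set z := 2 * γ' * x / μ with hz
  have hz0 : 0 ≤ z := by positivity
  have key := key_aux z hz0
  -- LHS ≤ 2z/(2+z)
  have hstep : 2 * γ' * (1 * x / (μ + γ)) ≤ 2 * z / (2 + z) := by
    have hzval : 2 * z / (2 + z) = 2 * γ' * x / (μ + γ' * x) := by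
      rw [hz]
      have hμ : μ ≠ 0 := ne_of_gt hμ0
      have hd : 0 < μ + γ' * x := by positivity
      field_simp
    rw [hzval, one_mul]
    have hgx : γ' * x ≤ γ := by nlinarith
    have hd : (0:ℝ) < μ + γ' * x := by positivity
    rw [show 2 * γ' * x / (μ + γ' * x) = 2 * γ' * (x / (μ + γ' * x)) from mul_div_assoc ..]
    apply mul_le_mul_of_nonneg_left _ (by positivity : (0:ℝ) ≤ 2 * γ')
    rcases eq_or_lt_of_le hx0 with h | h
    · simp [← h]
    · exact div_le_div_of_nonneg_left hx0 hd (by linarith)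
  calc 2 * γ' * (1 * x / (μ + γ)) ≤ 2 * z / (2 + z) := hstep
    _ ≤ Real.log (1 + z) := key
    _ = Real.log (1 + 2 * γ' * (1 * x / μ)) := by rw [hz]; ring_nf
end
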